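/- Define L₁₀ = {(a,b,c,d) ∈ ℤ⁴ : 3 ∣ b, 3 ∣ c, 2 ∣ (a + b/3 + c/3), 2 ∣ (b/3 + c/3 + d)} and L₂ = {(a,b,c,d) ∈ ℤ⁴ : 3 ∣ b, 3 ∣ c}, and for x ∈ L₂ set Q(x) = P(x)/27 where P is the discriminant. Then L₁₀ is the disjoint union of 2L₂ and {x ∈ L₂ : Q(x) ≡ 3 (mod 8)}. -/

import Mathlib

/-- Discriminant of an integral binary cubic form. -/
def discZ (x : ℤ × ℤ × ℤ × ℤ) : ℤ :=
  match x with
  | (a, b, c, d) =>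
    b ^ 2 * c ^ 2 + 18 * a * b * c * d - 4 * a * c ^ 3 - 4 * b ^ 3 * d - 27 * a ^ 2 * d ^ 2

def L₂ : Set (ℤ × ℤ × ℤ × ℤ) := {x | 3 ∣ x.2.1 ∧ 3 ∣ x.2.2.1}

def L₁₀ : Set (ℤ × ℤ × ℤ × ℤ) :=
  {x | 3 ∣ x.2.1 ∧ 3 ∣ x.2.2.1 ∧ 2 ∣ (x.1 + x.2.1 / 3 + x.2.2.1 / 3) ∧
    2 ∣ (x.2.1 / 3 + x.2.2.1 / 3 + x.2.2.2)}

def doubleL₂ : Set (ℤ × ℤ × ℤ × ℤ) := (fun y => (2 : ℤ) • y) '' L₂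

private def qz (a b c d : ℤ) : ℤ :=
  3*b^2*c^2 + 6*a*b*c*d - 4*a*c^3 - 4*b^3*d - a^2*d^2

private def h28 : (2:ℕ) ∣ 8 := by norm_num

private lemma key (a b c d : ZMod 8) :
    (3*b^2*c^2 + 6*a*b*c*d - 4*a*c^3 - 4*b^3*d - a^2*d^2 = 3) ↔
      ((ZMod.castHom h28 (ZMod 2) (a+b+c) = 0) ∧
       (ZMod.castHom h28 (ZMod 2) (b+c+d) = 0) ∧
       ¬(ZMod.castHom h28 (ZMod 2) a = 0 ∧
         ZMod.castHom h28 (ZMod 2) b = 0 ∧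
         ZMod.castHom h28 (ZMod 2) c = 0 ∧
         ZMod.castHom h28 (ZMod 2) d = 0)) := by
  revert a b c d; decide

private lemma cast2 (n : ℤ) :
    ZMod.castHom h28 (ZMod 2) ((n : ZMod 8)) = (n : ZMod 2) :=
  map_intCast _ n

private lemma dvd2 (n : ℤ) : 2 ∣ n ↔ (n : ZMod 2) = 0 :=
  (ZMod.intCast_zmod_eq_zero_iff_dvd n 2).symm

private lemma qmod (a b c d : ℤ) :
    qz a b c d ≡ 3 [ZMOD 8] ↔
      (2 ∣ (a+b+c) ∧ 2 ∣ (b+c+d) ∧ ¬(2 ∣ a ∧ 2 ∣ b ∧ 2 ∣ c ∧ 2 ∣ d)) := by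
  have h : qz a b c d ≡ 3 [ZMOD 8] ↔ ((qz a b c d : ZMod 8) = ((3:ℤ) : ZMod 8)) :=
    (ZMod.intCast_eq_intCast_iff _ _ _).symm
  rw [h]
  have : ((qz a b c d : ZMod 8)) =
      3*(b:ZMod 8)^2*(c:ZMod 8)^2 + 6*(a:ZMod 8)*(b:ZMod 8)*(c:ZMod 8)*(d:ZMod 8)
        - 4*(a:ZMod 8)*(c:ZMod 8)^3 - 4*(b:ZMod 8)^3*(d:ZMod 8)
        - (a:ZMod 8)^2*(d:ZMod 8)^2 := by
    simp only [qz]; push_cast; ring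
  rw [this, show ((3:ℤ) : ZMod 8) = 3 by norm_num,
    key (a : ZMod 8) (b : ZMod 8) (c : ZMod 8) (d : ZMod 8)]
  have e1 : ((a : ZMod 8) + b + c) = (((a+b+c : ℤ)) : ZMod 8) := by push_cast; ring
  have e2 : ((b : ZMod 8) + c + d) = (((b+c+d : ℤ)) : ZMod 8) := by push_cast; ring
  rw [e1, e2, cast2, cast2, cast2, cast2, cast2, cast2]
  rw [dvd2, dvd2, dvd2, dvd2, dvd2, dvd2]

private lemma discq (a b c d : ℤ) :
    discZ (a, 3*b, 3*c, d) / 27 = qz a b c d := by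
  have : discZ (a, 3*b, 3*c, d) = 27 * qz a b c d := by
    simp only [discZ, qz]; ring
  rw [this]
  exact Int.mul_ediv_cancel_left _ (by norm_num)

private lemma memL₁₀ (a b c d : ℤ) :
    (a, 3*b, 3*c, d) ∈ L₁₀ ↔ 2 ∣ (a+b+c) ∧ 2 ∣ (b+c+d) := by
  simp [L₁₀, Int.mul_ediv_cancel_left _ (show (3:ℤ) ≠ 0 by norm_num)]

private lemma memDouble (a b c d : ℤ) :
    (a, 3*b, 3*c, d) ∈ doubleL₂ ↔ 2 ∣ a ∧ 2 ∣ b ∧ 2 ∣ c ∧ 2 ∣ d := by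
  constructor
  · rintro ⟨⟨a', b', c', d'⟩, ⟨hb, hc⟩, hy⟩
    simp only [Prod.smul_def, smul_eq_mul, Prod.mk.injEq] at hy
    obtain ⟨h1, h2, h3, h4⟩ := hy
    refine ⟨⟨a', h1.symm⟩, ?_, ?_, ⟨d', h4.symm⟩⟩
    · have : (2:ℤ) ∣ 3*b := ⟨b', h2.symm⟩
      exact ((Int.prime_two.dvd_mul).mp this).resolve_left (by norm_num)
    · have : (2:ℤ) ∣ 3*c := ⟨c', h3.symm⟩
      exact ((Int.prime_two.dvd_mul).mp this).resolve_left (by norm_num)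
  · rintro ⟨⟨a', rfl⟩, ⟨b', rfl⟩, ⟨c', rfl⟩, ⟨d', rfl⟩⟩
    exact ⟨(a', 3*b', 3*c', d'), ⟨⟨b', rfl⟩, ⟨c', rfl⟩⟩, by
      simp [Prod.smul_def, smul_eq_mul, Prod.mk.injEq]; omega⟩

private lemma memRight (a b c d : ℤ) :
    (a, 3*b, 3*c, d) ∈ {x ∈ L₂ | discZ x / 27 ≡ 3 [ZMOD 8]} ↔
      (2 ∣ (a+b+c) ∧ 2 ∣ (b+c+d) ∧ ¬(2 ∣ a ∧ 2 ∣ b ∧ 2 ∣ c ∧ 2 ∣ d)) := by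
  have hL : (a, 3*b, 3*c, d) ∈ L₂ := ⟨⟨b, rfl⟩, ⟨c, rfl⟩⟩
  simp only [Set.mem_setOf_eq, hL, true_and, discq, qmod]

theorem stmt9 :
    L₁₀ = doubleL₂ ∪ {x ∈ L₂ | discZ x / 27 ≡ 3 [ZMOD 8]} ∧
      doubleL₂ ∩ {x ∈ L₂ | discZ x / 27 ≡ 3 [ZMOD 8]} = ∅ := by
  constructor
  · ext x
    obtain ⟨a, b, c, d⟩ := x
    constructor
    · rintro ⟨⟨b', rfl⟩, ⟨c', rfl⟩, h⟩
      have h' : 2 ∣ (a + b' + c') ∧ 2 ∣ (b' + c' + d) :=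
        (memL₁₀ a b' c' d).mp ⟨⟨b', rfl⟩, ⟨c', rfl⟩, h⟩
      by_cases he : 2 ∣ a ∧ 2 ∣ b' ∧ 2 ∣ c' ∧ 2 ∣ d
      · exact Or.inl ((memDouble a b' c' d).mpr he)
      · exact Or.inr ((memRight a b' c' d).mpr ⟨h'.1, h'.2, he⟩)
    · rintro (hx | hx)
      · obtain ⟨⟨a', b0, c0, d0⟩, ⟨⟨b', rfl⟩, ⟨c', rfl⟩⟩, hy⟩ := hx
        simp only [Prod.smul_def, smul_eq_mul, Prod.mk.injEq] at hy
        obtain ⟨h1, h2, h3, h4⟩ := hy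
        subst h1; subst h2; subst h3; subst h4
        have e2 : 2 * (3 * b') = 3 * (2 * b') := by ring
        have e3 : 2 * (3 * c') = 3 * (2 * c') := by ring
        rw [e2, e3, memL₁₀]
        exact ⟨⟨a' + b' + c', by ring⟩, ⟨b' + c' + d0, by ring⟩⟩
      · obtain ⟨⟨⟨b', rfl⟩, ⟨c', rfl⟩⟩, hq⟩ := hx
        have h' := (memRight a b' c' d).mp ⟨⟨⟨b', rfl⟩, ⟨c', rfl⟩⟩, hq⟩
        exact (memL₁₀ a b' c' d).mpr ⟨h'.1, h'.2.1⟩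
  · rw [Set.eq_empty_iff_forall_notMem]
    rintro ⟨a, b, c, d⟩ ⟨h1, h2⟩
    obtain ⟨⟨b', rfl⟩, ⟨c', rfl⟩⟩ := h2.1
    have hd := (memDouble a b' c' d).mp h1
    have hr := (memRight a b' c' d).mp h2
    exact hr.2.2 hd
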